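/- arXiv:2407.06503 — 2 statements merged into one kernel-verified Lean document; each statement's English description precedes it below -/
import Mathlib

section
/- Performance difference lemma (Lemma 4 of the paper): For any two stationary stochastic policies π1 and π2 in a finite MDP with discount factor γ ∈ (0,1), J(π1) = J(π2) + E_{τ∼π1}[ Σ_{t=0}^∞ γ^t A_{π2}(s_t, a_t) ], where the expectation is over trajectories τ = (s_0, a_0, s_1, a_1, …) generated by running π1 from the initial distribution ρ0. -/
open scoped BigOperators

/-- A finite Markov decision process with state space `S`, action space `A`,
transition kernel `P`, reward `r`, initial distribution `ρ0`, discount `γ ∈ (0,1)`. -/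
structure MDP (S A : Type) [Fintype S] [Fintype A] where
  P : S → A → S → ℝ
  P_nonneg : ∀ s a s', 0 ≤ P s a s'
  P_sum_one : ∀ s a, (∑ s', P s a s') = 1
  r : S → A → ℝ
  ρ0 : S → ℝ
  ρ0_nonneg : ∀ s, 0 ≤ ρ0 s
  ρ0_sum_one : (∑ s, ρ0 s) = 1
  γ : ℝ
  γ_pos : 0 < γ
  γ_lt_one : γ < 1

/-- A stationary stochastic policy: a probability distribution over actions for each state. -/
structure Policy (S A : Type) [Fintype S] [Fintype A] where
  p : S → A → ℝ
  nonneg : ∀ s a, 0 ≤ p s a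
  sum_one : ∀ s, (∑ a, p s a) = 1

namespace MDP

variable {S A : Type} [Fintype S] [Fintype A]

/-- The distribution of the state at time `t`, starting from the initial distribution `μ`
and following policy `π`. -/
noncomputable def stateDist (M : MDP S A) (π : Policy S A) (μ : S → ℝ) : ℕ → S → ℝ
  | 0 => μ
  | (t + 1) => fun s' => ∑ s, ∑ a, M.stateDist π μ t s * π.p s a * M.P s a s'

/-- `E_{τ∼π}[ Σ_{t=0}^∞ γ^t f(s_t, a_t) ]` for trajectories started from the
initial state distribution `μ` and generated by policy `π`. -/
noncomputable def expSum (M : MDP S A) (π : Policy S A) (μ : S → ℝ) (f : S → A → ℝ) : ℝ :=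
  ∑' t : ℕ, M.γ ^ t * ∑ s, ∑ a, M.stateDist π μ t s * π.p s a * f s a

/-- The expected discounted return `J(π)`. -/
noncomputable def J (M : MDP S A) (π : Policy S A) : ℝ :=
  M.expSum π M.ρ0 M.r

/-- The value function `V_π(s)`. -/
noncomputable def V (M : MDP S A) [DecidableEq S] (π : Policy S A) (s : S) : ℝ :=
  M.expSum π (fun s' => if s' = s then 1 else 0) M.r

/-- The action-value function `Q_π(s,a)`. -/
noncomputable def Q (M : MDP S A) [DecidableEq S] (π : Policy S A) (s : S) (a : A) : ℝ :=
  M.r s a + M.γ * ∑ s', M.P s a s' * M.V π s'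

/-- The advantage function `A_π(s,a) = Q_π(s,a) − V_π(s)`. -/
noncomputable def Adv (M : MDP S A) [DecidableEq S] (π : Policy S A) (s : S) (a : A) : ℝ :=
  M.Q π s a - M.V π s

/-- The discounted state visitation distribution `d_π(s) = (1−γ) Σ_t γ^t Pr(s_t = s)`. -/
noncomputable def d (M : MDP S A) (π : Policy S A) (s : S) : ℝ :=
  (1 - M.γ) * ∑' t : ℕ, M.γ ^ t * M.stateDist π M.ρ0 t s

end MDP

namespace MDPaux

open MDP

variable {S A : Type} [Fintype S] [Fintype A]

lemma stateDist_nonneg (M : MDP S A) (π : Policy S A) (μ : S → ℝ) (hμ : ∀ s, 0 ≤ μ s) :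
    ∀ t s, 0 ≤ M.stateDist π μ t s := by
  intro t
  induction t with
  | zero => exact hμ
  | succ t ih =>
    intro s'
    apply Finset.sum_nonneg; intro s _
    apply Finset.sum_nonneg; intro a _
    exact mul_nonneg (mul_nonneg (ih s) (π.nonneg s a)) (M.P_nonneg s a s')

lemma stateDist_sum_one (M : MDP S A) (π : Policy S A) (μ : S → ℝ) (hμ : (∑ s, μ s) = 1) :
    ∀ t, (∑ s, M.stateDist π μ t s) = 1 := by
  intro t
  induction t with
  | zero => exact hμ
  | succ t ih =>
    show (∑ s', ∑ s, ∑ a, M.stateDist π μ t s * π.p s a * M.P s a s') = 1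
    rw [Finset.sum_comm]
    have : ∀ s, (∑ s' : S, ∑ a, M.stateDist π μ t s * π.p s a * M.P s a s')
        = M.stateDist π μ t s := by
      intro s
      rw [Finset.sum_comm]
      have : ∀ a, (∑ s', M.stateDist π μ t s * π.p s a * M.P s a s')
          = M.stateDist π μ t s * π.p s a := by
        intro a
        rw [← Finset.mul_sum, M.P_sum_one, mul_one]
      simp_rw [this, ← Finset.mul_sum, π.sum_one, mul_one]
    simp_rw [this, ih]

lemma stateDist_le_one (M : MDP S A) (π : Policy S A) (μ : S → ℝ) (hμ : ∀ s, 0 ≤ μ s)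
    (hμ1 : (∑ s, μ s) = 1) (t : ℕ) (s : S) : M.stateDist π μ t s ≤ 1 := by
  have h := stateDist_sum_one M π μ hμ1 t
  calc M.stateDist π μ t s ≤ ∑ s', M.stateDist π μ t s' :=
        Finset.single_le_sum (fun s' _ => stateDist_nonneg M π μ hμ t s') (Finset.mem_univ s)
    _ = 1 := h

lemma p_le_one (π : Policy S A) (s : S) (a : A) : π.p s a ≤ 1 := by
  calc π.p s a ≤ ∑ a', π.p s a' :=
        Finset.single_le_sum (fun a' _ => π.nonneg s a') (Finset.mem_univ a)
    _ = 1 := π.sum_one s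

lemma expSum_summable (M : MDP S A) (π : Policy S A) (μ : S → ℝ) (hμ : ∀ s, 0 ≤ μ s)
    (hμ1 : (∑ s, μ s) = 1) (f : S → A → ℝ) :
    Summable (fun t : ℕ => M.γ ^ t * ∑ s, ∑ a, M.stateDist π μ t s * π.p s a * f s a) := by
  apply Summable.of_norm_bounded (g := fun t : ℕ => (∑ s, ∑ a, |f s a|) * M.γ ^ t)
    ((summable_geometric_of_lt_one M.γ_pos.le M.γ_lt_one).mul_left _)
  intro t
  rw [Real.norm_eq_abs, abs_mul, abs_pow, abs_of_nonneg M.γ_pos.le, mul_comm]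
  apply mul_le_mul_of_nonneg_right _ (pow_nonneg M.γ_pos.le t)
  calc |∑ s, ∑ a, M.stateDist π μ t s * π.p s a * f s a|
      ≤ ∑ s, ∑ a, |M.stateDist π μ t s * π.p s a * f s a| := by
        refine (Finset.abs_sum_le_sum_abs _ _).trans ?_
        exact Finset.sum_le_sum fun s _ => Finset.abs_sum_le_sum_abs _ _
    _ ≤ ∑ s, ∑ a, |f s a| := by
        refine Finset.sum_le_sum fun s _ => Finset.sum_le_sum fun a _ => ?_
        rw [abs_mul, abs_of_nonneg (mul_nonneg (stateDist_nonneg M π μ hμ t s) (π.nonneg s a))]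
        apply mul_le_of_le_one_left (abs_nonneg _)
        exact mul_le_one₀ (stateDist_le_one M π μ hμ hμ1 t s) (π.nonneg s a) (p_le_one π s a)

lemma stateDist_linear [DecidableEq S] (M : MDP S A) (π : Policy S A) (μ : S → ℝ) (t : ℕ) (s : S) :
    M.stateDist π μ t s
      = ∑ s0, μ s0 * M.stateDist π (fun s' => if s' = s0 then 1 else 0) t s := by
  induction t generalizing s with
  | zero => simp [MDP.stateDist, mul_comm]
  | succ t ih =>
    show (∑ s1, ∑ a, M.stateDist π μ t s1 * π.p s1 a * M.P s1 a s) = _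
    simp_rw [ih]
    calc (∑ s1, ∑ a, (∑ s0, μ s0 * M.stateDist π (fun s' => if s' = s0 then 1 else 0) t s1)
            * π.p s1 a * M.P s1 a s)
        = ∑ s1, ∑ a, ∑ s0, μ s0 * (M.stateDist π (fun s' => if s' = s0 then 1 else 0) t s1
            * π.p s1 a * M.P s1 a s) := by
          refine Finset.sum_congr rfl fun s1 _ => Finset.sum_congr rfl fun a _ => ?_
          rw [Finset.sum_mul, Finset.sum_mul]
          exact Finset.sum_congr rfl fun s0 _ => by ring
      _ = ∑ s1, ∑ s0, ∑ a, μ s0 * (M.stateDist π (fun s' => if s' = s0 then 1 else 0) t s1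
            * π.p s1 a * M.P s1 a s) :=
          Finset.sum_congr rfl fun s1 _ => Finset.sum_comm
      _ = ∑ s0, ∑ s1, ∑ a, μ s0 * (M.stateDist π (fun s' => if s' = s0 then 1 else 0) t s1
            * π.p s1 a * M.P s1 a s) := Finset.sum_comm
      _ = ∑ s0, μ s0 * ∑ s1, ∑ a, M.stateDist π (fun s' => if s' = s0 then 1 else 0) t s1
            * π.p s1 a * M.P s1 a s := by
          simp_rw [Finset.mul_sum]

lemma expSum_linear [DecidableEq S] (M : MDP S A) (π : Policy S A) (μ : S → ℝ)
    (f : S → A → ℝ) :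
    M.expSum π μ f = ∑ s0, μ s0 * M.expSum π (fun s' => if s' = s0 then 1 else 0) f := by
  unfold MDP.expSum
  have key : ∀ t : ℕ, (M.γ ^ t * ∑ s, ∑ a, M.stateDist π μ t s * π.p s a * f s a)
      = ∑ s0, μ s0 * (M.γ ^ t *
        ∑ s, ∑ a, M.stateDist π (fun s' => if s' = s0 then 1 else 0) t s * π.p s a * f s a) := by
    intro t
    simp_rw [stateDist_linear M π μ t]
    calc (M.γ ^ t * ∑ s, ∑ a,
            (∑ s0, μ s0 * M.stateDist π (fun s' => if s' = s0 then 1 else 0) t s)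
            * π.p s a * f s a)
        = ∑ s, ∑ a, ∑ s0, μ s0 * (M.γ ^ t
            * (M.stateDist π (fun s' => if s' = s0 then 1 else 0) t s * π.p s a * f s a)) := by
          rw [Finset.mul_sum]
          refine Finset.sum_congr rfl fun s _ => ?_
          rw [Finset.mul_sum]
          refine Finset.sum_congr rfl fun a _ => ?_
          rw [Finset.sum_mul, Finset.sum_mul, Finset.mul_sum]
          exact Finset.sum_congr rfl fun s0 _ => by ring
      _ = ∑ s, ∑ s0, ∑ a, μ s0 * (M.γ ^ t
            * (M.stateDist π (fun s' => if s' = s0 then 1 else 0) t s * π.p s a * f s a)) :=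
          Finset.sum_congr rfl fun s _ => Finset.sum_comm
      _ = ∑ s0, ∑ s, ∑ a, μ s0 * (M.γ ^ t
            * (M.stateDist π (fun s' => if s' = s0 then 1 else 0) t s * π.p s a * f s a)) :=
          Finset.sum_comm
      _ = ∑ s0, μ s0 * (M.γ ^ t * ∑ s, ∑ a,
            M.stateDist π (fun s' => if s' = s0 then 1 else 0) t s * π.p s a * f s a) := by
          simp_rw [Finset.mul_sum]
  simp_rw [key]
  rw [Summable.tsum_finsetSum]
  · exact Finset.sum_congr rfl fun s0 _ => tsum_mul_left
  · intro s0 _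
    apply Summable.mul_left
    exact expSum_summable M π _ (fun s => by positivity) (by simp) f

end MDPaux


/-- Performance difference lemma: for any two stationary stochastic policies
`π1` and `π2` in a finite MDP,
`J(π1) = J(π2) + E_{τ∼π1}[ Σ_t γ^t A_{π2}(s_t, a_t) ]`. -/
theorem performance_difference {S A : Type} [Fintype S] [Fintype A] [Nonempty S] [Nonempty A]
    [DecidableEq S] (M : MDP S A) (π1 π2 : Policy S A) :
    M.J π1 = M.J π2 + M.expSum π1 M.ρ0 (fun s a => M.Adv π2 s a) := by
  classical
  set W : ℕ → ℝ := fun t => ∑ s, M.stateDist π1 M.ρ0 t s * M.V π2 s with hWdef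
  set b : ℕ → ℝ := fun t => M.γ ^ t * W t with hbdef
  have hd0 := MDPaux.stateDist_nonneg M π1 M.ρ0 M.ρ0_nonneg
  have hd1 := MDPaux.stateDist_sum_one M π1 M.ρ0 M.ρ0_sum_one
  -- pointwise identity
  have key : ∀ t : ℕ,
      (M.γ ^ t * ∑ s, ∑ a, M.stateDist π1 M.ρ0 t s * π1.p s a * M.Adv π2 s a)
      = (M.γ ^ t * ∑ s, ∑ a, M.stateDist π1 M.ρ0 t s * π1.p s a * M.r s a)
        + (b (t + 1) - b t) := by
    intro t
    have h2 : (∑ s, ∑ a, M.stateDist π1 M.ρ0 t s * π1.p s a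
          * (M.γ * ∑ s', M.P s a s' * M.V π2 s')) = M.γ * W (t + 1) := by
      have hW1 : W (t + 1) = ∑ s', (∑ s, ∑ a,
          M.stateDist π1 M.ρ0 t s * π1.p s a * M.P s a s') * M.V π2 s' := rfl
      rw [hW1]
      calc (∑ s, ∑ a, M.stateDist π1 M.ρ0 t s * π1.p s a
              * (M.γ * ∑ s', M.P s a s' * M.V π2 s'))
          = ∑ s, ∑ a, ∑ s', M.γ * (M.stateDist π1 M.ρ0 t s * π1.p s a
              * M.P s a s' * M.V π2 s') := by
            refine Finset.sum_congr rfl fun s _ => Finset.sum_congr rfl fun a _ => ?_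
            rw [Finset.mul_sum, Finset.mul_sum]
            exact Finset.sum_congr rfl fun s' _ => by ring
        _ = ∑ s, ∑ s', ∑ a, M.γ * (M.stateDist π1 M.ρ0 t s * π1.p s a
              * M.P s a s' * M.V π2 s') :=
            Finset.sum_congr rfl fun s _ => Finset.sum_comm
        _ = ∑ s', ∑ s, ∑ a, M.γ * (M.stateDist π1 M.ρ0 t s * π1.p s a
              * M.P s a s' * M.V π2 s') := Finset.sum_comm
        _ = M.γ * ∑ s', (∑ s, ∑ a,
              M.stateDist π1 M.ρ0 t s * π1.p s a * M.P s a s') * M.V π2 s' := by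
            simp_rw [Finset.mul_sum, Finset.sum_mul]
            refine Finset.sum_congr rfl fun s' _ => ?_
            rw [Finset.mul_sum]
            refine Finset.sum_congr rfl fun s _ => ?_
            rw [Finset.mul_sum]
    have h3 : (∑ s, ∑ a, M.stateDist π1 M.ρ0 t s * π1.p s a * M.V π2 s) = W t := by
      refine Finset.sum_congr rfl fun s _ => ?_
      calc (∑ a, M.stateDist π1 M.ρ0 t s * π1.p s a * M.V π2 s)
          = M.stateDist π1 M.ρ0 t s * M.V π2 s * ∑ a, π1.p s a := by
            rw [Finset.mul_sum]
            exact Finset.sum_congr rfl fun a _ => by ring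
        _ = M.stateDist π1 M.ρ0 t s * M.V π2 s := by rw [π1.sum_one, mul_one]
    have h1 : (∑ s, ∑ a, M.stateDist π1 M.ρ0 t s * π1.p s a * M.Adv π2 s a)
        = (∑ s, ∑ a, M.stateDist π1 M.ρ0 t s * π1.p s a * M.r s a)
          + M.γ * W (t + 1) - W t := by
      simp only [MDP.Adv, MDP.Q]
      simp_rw [mul_sub, mul_add, Finset.sum_sub_distrib, Finset.sum_add_distrib]
      rw [h2, h3]
    rw [h1, hbdef]
    ring
  -- summabilities
  have sumR : Summable (fun t : ℕ =>
      M.γ ^ t * ∑ s, ∑ a, M.stateDist π1 M.ρ0 t s * π1.p s a * M.r s a) :=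
    MDPaux.expSum_summable M π1 M.ρ0 M.ρ0_nonneg M.ρ0_sum_one M.r
  have sumb : Summable b := by
    apply Summable.of_norm_bounded (g := fun t : ℕ => (∑ s, |M.V π2 s|) * M.γ ^ t)
      ((summable_geometric_of_lt_one M.γ_pos.le M.γ_lt_one).mul_left _)
    intro t
    rw [hbdef]
    rw [Real.norm_eq_abs, abs_mul, abs_pow, abs_of_nonneg M.γ_pos.le, mul_comm]
    apply mul_le_mul_of_nonneg_right _ (pow_nonneg M.γ_pos.le t)
    calc |W t| ≤ ∑ s, |M.stateDist π1 M.ρ0 t s * M.V π2 s| := Finset.abs_sum_le_sum_abs _ _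
      _ ≤ ∑ s, |M.V π2 s| := by
          refine Finset.sum_le_sum fun s _ => ?_
          rw [abs_mul, abs_of_nonneg (hd0 t s)]
          exact mul_le_of_le_one_left (abs_nonneg _)
            (MDPaux.stateDist_le_one M π1 M.ρ0 M.ρ0_nonneg M.ρ0_sum_one t s)
  have sumb1 : Summable (fun t => b (t + 1)) := (summable_nat_add_iff 1).2 sumb
  have hJ2 : M.J π2 = b 0 := by
    rw [MDP.J, MDPaux.expSum_linear, hbdef]
    simp [hWdef, MDP.stateDist, MDP.V]
  have hmain : M.expSum π1 M.ρ0 (fun s a => M.Adv π2 s a) = M.J π1 - b 0 := by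
    rw [MDP.expSum, MDP.J, MDP.expSum]
    simp_rw [key]
    rw [Summable.tsum_add sumR (sumb1.sub sumb), Summable.tsum_sub sumb1 sumb]
    have := Summable.tsum_eq_zero_add sumb
    linarith
  rw [hmain, hJ2]
  ring
end

section
/- Three-policy return-decomposition identity (proved in Appendix B of the paper): For any three stationary stochastic policies π, π̃, and π_b in a finite MDP with discount factor γ ∈ (0,1), J(π̃) − J(π_b) = E_{τ∼π̃}[ Σ_{t=0}^∞ γ^t A^{π̃|π}(s_t) ] − E_{τ∼π_b}[ Σ_{t=0}^∞ γ^t A^{π_b|π}(s_t) ], where the first expectation is over trajectories generated by π̃ from ρ0 and the second is over trajectories generated by π_b from ρ0. -/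
open scoped BigOperators

namespace MDP
variable {S A : Type} [Fintype S] [Fintype A]

lemma stateDist_nonneg (M : MDP S A) (π : Policy S A) (μ : S → ℝ) (hμ : ∀ s, 0 ≤ μ s) :
    ∀ t s, 0 ≤ M.stateDist π μ t s := by
  intro t
  induction t with
  | zero => exact hμ
  | succ t ih =>
      intro s'
      exact Finset.sum_nonneg fun s _ => Finset.sum_nonneg fun a _ =>
        mul_nonneg (mul_nonneg (ih s) (π.nonneg s a)) (M.P_nonneg s a s')

lemma stateDist_sum (M : MDP S A) (π : Policy S A) (μ : S → ℝ) :
    ∀ t, (∑ s, M.stateDist π μ t s) = ∑ s, μ s := by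
  intro t
  induction t with
  | zero => rfl
  | succ t ih =>
      calc (∑ s', ∑ s, ∑ a, M.stateDist π μ t s * π.p s a * M.P s a s')
          = ∑ s, ∑ a, ∑ s', M.stateDist π μ t s * π.p s a * M.P s a s' := by
            rw [Finset.sum_comm]
            exact Finset.sum_congr rfl fun s _ => Finset.sum_comm
        _ = ∑ s, ∑ a, M.stateDist π μ t s * π.p s a := by
            refine Finset.sum_congr rfl fun s _ => Finset.sum_congr rfl fun a _ => ?_
            rw [← Finset.mul_sum, M.P_sum_one, mul_one]
        _ = ∑ s, M.stateDist π μ t s := by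
            refine Finset.sum_congr rfl fun s _ => ?_
            rw [← Finset.mul_sum, π.sum_one, mul_one]
        _ = ∑ s, μ s := ih

lemma stateDist_le_one (M : MDP S A) (π : Policy S A) (t : ℕ) (s : S) :
    M.stateDist π M.ρ0 t s ≤ 1 := by
  have h := M.stateDist_sum π M.ρ0 t
  rw [M.ρ0_sum_one] at h
  calc M.stateDist π M.ρ0 t s
      ≤ ∑ s', M.stateDist π M.ρ0 t s' :=
        Finset.single_le_sum (fun s' _ => M.stateDist_nonneg π M.ρ0 M.ρ0_nonneg t s') (Finset.mem_univ s)
    _ = 1 := h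

lemma abs_dist_sum_le (M : MDP S A) (π : Policy S A) (t : ℕ) (g : S → ℝ) :
    |∑ s, M.stateDist π M.ρ0 t s * g s| ≤ ∑ s, |g s| := by
  calc |∑ s, M.stateDist π M.ρ0 t s * g s| ≤ ∑ s, |M.stateDist π M.ρ0 t s * g s| :=
        Finset.abs_sum_le_sum_abs _ _
    _ ≤ ∑ s, |g s| := by
        refine Finset.sum_le_sum fun s _ => ?_
        rw [abs_mul]
        calc |M.stateDist π M.ρ0 t s| * |g s| = M.stateDist π M.ρ0 t s * |g s| := by
              rw [abs_of_nonneg (M.stateDist_nonneg π M.ρ0 M.ρ0_nonneg t s)]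
          _ ≤ 1 * |g s| := by
              exact mul_le_mul_of_nonneg_right (M.stateDist_le_one π t s) (abs_nonneg _)
          _ = |g s| := one_mul _

lemma summable_geom_bound (M : MDP S A) (f : ℕ → ℝ) (C : ℝ)
    (h : ∀ t, |f t| ≤ C * M.γ ^ t) : Summable f := by
  have hg : Summable (fun t : ℕ => C * M.γ ^ t) :=
    (summable_geometric_of_lt_one M.γ_pos.le M.γ_lt_one).mul_left C
  exact Summable.of_norm_bounded hg (fun t => by simpa using h t)

lemma key (M : MDP S A) [DecidableEq S] (π π' : Policy S A) :
    (∑' t : ℕ, M.γ ^ t * ∑ s, M.stateDist π' M.ρ0 t s * ∑ a, π'.p s a * M.Adv π s a)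
      = M.J π' - ∑ s, M.ρ0 s * M.V π s := by
  set γ := M.γ with hγ
  set D : ℕ → S → ℝ := M.stateDist π' M.ρ0 with hD
  set W : ℕ → ℝ := fun t => γ ^ t * ∑ s, D t s * M.V π s with hW
  set R : ℕ → ℝ := fun t => γ ^ t * ∑ s, ∑ a, D t s * π'.p s a * M.r s a with hR
  set fA : ℕ → ℝ := fun t => γ ^ t * ∑ s, D t s * ∑ a, π'.p s a * M.Adv π s a with hfA
  -- per-state expansion of the expected advantage
  have hadv : ∀ s, (∑ a, π'.p s a * M.Adv π s a)
      = (∑ a, π'.p s a * M.r s a)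
        + γ * (∑ a, π'.p s a * ∑ s', M.P s a s' * M.V π s') - M.V π s := by
    intro s
    have : (∑ a, π'.p s a * M.Adv π s a)
        = ∑ a, (π'.p s a * M.r s a + γ * (π'.p s a * ∑ s', M.P s a s' * M.V π s')
            - π'.p s a * M.V π s) := by
      refine Finset.sum_congr rfl fun a _ => ?_
      simp only [MDP.Adv, MDP.Q]
      ring
    rw [this, Finset.sum_sub_distrib, Finset.sum_add_distrib, ← Finset.mul_sum,
      ← Finset.sum_mul, π'.sum_one, one_mul]
  -- termwise identity
  have hterm : ∀ t, fA t = R t + (W (t + 1) - W t) := by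
    intro t
    have hmid : γ ^ (t + 1) * ∑ s', D (t + 1) s' * M.V π s'
        = γ ^ t * ∑ s, D t s * (γ * ∑ a, π'.p s a * ∑ s', M.P s a s' * M.V π s') := by
      have hswap : (∑ s', D (t + 1) s' * M.V π s')
          = ∑ s, ∑ a, ∑ s', D t s * π'.p s a * M.P s a s' * M.V π s' := by
        simp only [hD, MDP.stateDist]
        rw [show (∑ s', (∑ s, ∑ a, M.stateDist π' M.ρ0 t s * π'.p s a * M.P s a s') * M.V π s')
            = ∑ s', ∑ s, ∑ a, M.stateDist π' M.ρ0 t s * π'.p s a * M.P s a s' * M.V π s' from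
          Finset.sum_congr rfl fun s' _ => by rw [Finset.sum_mul]; exact Finset.sum_congr rfl fun s _ => Finset.sum_mul _ _ _]
        rw [Finset.sum_comm]
        exact Finset.sum_congr rfl fun s _ => Finset.sum_comm
      rw [hswap]
      rw [pow_succ]
      simp only [Finset.mul_sum]
      refine Finset.sum_congr rfl fun s _ => Finset.sum_congr rfl fun a _ =>
        Finset.sum_congr rfl fun s' _ => by ring
    have hRterm : R t = γ ^ t * ∑ s, D t s * ∑ a, π'.p s a * M.r s a := by
      simp only [hR]
      congr 1
      refine Finset.sum_congr rfl fun s _ => ?_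
      rw [Finset.mul_sum]
      exact Finset.sum_congr rfl fun a _ => by ring
    simp only [hfA]
    rw [hRterm]
    simp only [hW]
    rw [hmid]
    rw [show (∑ s, D t s * ∑ a, π'.p s a * M.Adv π s a)
        = ∑ s, (D t s * ∑ a, π'.p s a * M.r s a
            + D t s * (γ * ∑ a, π'.p s a * ∑ s', M.P s a s' * M.V π s')
            - D t s * M.V π s) from
      Finset.sum_congr rfl fun s _ => by rw [hadv s]; ring]
    rw [Finset.sum_sub_distrib, Finset.sum_add_distrib]
    ring
  -- bounds and summability
  have hWb : ∀ t, |W t| ≤ (∑ s, |M.V π s|) * γ ^ t := by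
    intro t
    have := M.abs_dist_sum_le π' t (fun s => M.V π s)
    calc |W t| = γ ^ t * |∑ s, D t s * M.V π s| := by
          rw [hW, abs_mul, abs_of_nonneg (pow_nonneg M.γ_pos.le t)]
      _ ≤ γ ^ t * ∑ s, |M.V π s| :=
          mul_le_mul_of_nonneg_left this (pow_nonneg M.γ_pos.le t)
      _ = (∑ s, |M.V π s|) * γ ^ t := mul_comm _ _
  have hfAsum : Summable fA := by
    refine M.summable_geom_bound fA (∑ s, |∑ a, π'.p s a * M.Adv π s a|) fun t => ?_
    have := M.abs_dist_sum_le π' t (fun s => ∑ a, π'.p s a * M.Adv π s a)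
    calc |fA t| = γ ^ t * |∑ s, D t s * ∑ a, π'.p s a * M.Adv π s a| := by
          rw [hfA, abs_mul, abs_of_nonneg (pow_nonneg M.γ_pos.le t)]
      _ ≤ γ ^ t * ∑ s, |∑ a, π'.p s a * M.Adv π s a| :=
          mul_le_mul_of_nonneg_left this (pow_nonneg M.γ_pos.le t)
      _ = _ := mul_comm _ _
  have hRsum : Summable R := by
    refine M.summable_geom_bound R (∑ s, |∑ a, π'.p s a * M.r s a|) fun t => ?_
    have h1 : R t = γ ^ t * ∑ s, D t s * ∑ a, π'.p s a * M.r s a := by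
      simp only [hR]
      congr 1
      refine Finset.sum_congr rfl fun s _ => ?_
      rw [Finset.mul_sum]
      exact Finset.sum_congr rfl fun a _ => by ring
    have := M.abs_dist_sum_le π' t (fun s => ∑ a, π'.p s a * M.r s a)
    calc |R t| = γ ^ t * |∑ s, D t s * ∑ a, π'.p s a * M.r s a| := by
          rw [h1, abs_mul, abs_of_nonneg (pow_nonneg M.γ_pos.le t)]
      _ ≤ γ ^ t * ∑ s, |∑ a, π'.p s a * M.r s a| :=
          mul_le_mul_of_nonneg_left this (pow_nonneg M.γ_pos.le t)
      _ = _ := mul_comm _ _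
  have hTsum : Summable (fun t => W (t + 1) - W t) := by
    refine M.summable_geom_bound _ ((∑ s, |M.V π s|) * γ + (∑ s, |M.V π s|)) fun t => ?_
    calc |W (t + 1) - W t| ≤ |W (t + 1)| + |W t| := abs_sub _ _
      _ ≤ (∑ s, |M.V π s|) * γ ^ (t + 1) + (∑ s, |M.V π s|) * γ ^ t :=
          add_le_add (hWb (t + 1)) (hWb t)
      _ = ((∑ s, |M.V π s|) * γ + (∑ s, |M.V π s|)) * γ ^ t := by ring
  -- telescoping
  have hWlim : Filter.Tendsto W Filter.atTop (nhds 0) := by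
    have h0 : Filter.Tendsto (fun t : ℕ => (∑ s, |M.V π s|) * γ ^ t) Filter.atTop (nhds 0) := by
      have := tendsto_pow_atTop_nhds_zero_of_lt_one M.γ_pos.le M.γ_lt_one
      simpa using this.const_mul (∑ s, |M.V π s|)
    refine squeeze_zero_norm (fun t => ?_) h0
    simpa using hWb t
  have hTtsum : (∑' t, (W (t + 1) - W t)) = -W 0 := by
    have h1 := hTsum.hasSum.tendsto_sum_nat
    have h2 : Filter.Tendsto (fun n => ∑ t ∈ Finset.range n, (W (t + 1) - W t))
        Filter.atTop (nhds (-W 0)) := by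
      have : ∀ n, (∑ t ∈ Finset.range n, (W (t + 1) - W t)) = W n - W 0 := fun n =>
        Finset.sum_range_sub W n
      rw [show (fun n => ∑ t ∈ Finset.range n, (W (t + 1) - W t)) = fun n => W n - W 0 from
        funext this]
      simpa using hWlim.sub_const (W 0)
    exact tendsto_nhds_unique h1 h2
  -- assemble
  have : (∑' t, fA t) = (∑' t, R t) + ∑' t, (W (t + 1) - W t) := by
    rw [← Summable.tsum_add hRsum hTsum]
    exact tsum_congr hterm
  rw [show (∑' t : ℕ, M.γ ^ t * ∑ s, M.stateDist π' M.ρ0 t s * ∑ a, π'.p s a * M.Adv π s a)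
      = ∑' t, fA t from rfl, this, hTtsum]
  have hJ : M.J π' = ∑' t, R t := rfl
  have hW0 : W 0 = ∑ s, M.ρ0 s * M.V π s := by
    simp [hW, hD, MDP.stateDist]
  rw [← hJ, hW0]
  ring

end MDP

/-- Three-policy return-decomposition identity: for any stationary stochastic policies
`π`, `π̃`, `π_b`,
`J(π̃) − J(π_b) = E_{τ∼π̃}[Σ_t γ^t A^{π̃|π}(s_t)] − E_{τ∼π_b}[Σ_t γ^t A^{π_b|π}(s_t)]`,
where `A^{π1|π2}(s) = E_{a∼π1(·|s)}[A_{π2}(s,a)]`. -/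
theorem three_policy_decomposition {S A : Type} [Fintype S] [Fintype A]
    [Nonempty S] [Nonempty A] [DecidableEq S]
    (M : MDP S A) (π πTilde πb : Policy S A) :
    M.J πTilde - M.J πb =
      (∑' t : ℕ, M.γ ^ t * ∑ s, M.stateDist πTilde M.ρ0 t s *
          ∑ a, πTilde.p s a * M.Adv π s a) -
      (∑' t : ℕ, M.γ ^ t * ∑ s, M.stateDist πb M.ρ0 t s *
          ∑ a, πb.p s a * M.Adv π s a) := by
  rw [MDP.key M π πTilde, MDP.key M π πb]
  ring
end
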